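/- Symmetric half-neighbourhood correctness: Let points in ℝ² be assigned to grid cells of width d̄ > 0 as above. Define for each cell (i,j) the forward neighbourhood F(i,j) = {(i,j), (i,j+1), (i+1,j−1), (i+1,j), (i+1,j+1)}. Then for any two points p ≠ q with ‖p − q‖ < d̄ lying in cells c(p), c(q), either c(q) ∈ F(c(p)) or c(p) ∈ F(c(q)). -/
import Mathlib


noncomputable def eDist (p q : ℝ × ℝ) : ℝ :=
  Real.sqrt ((p.1 - q.1) ^ 2 + (p.2 - q.2) ^ 2)

/-- Cell index of a point for grid width `d`. -/
noncomputable def cell (d : ℝ) (r : ℝ × ℝ) : ℤ × ℤ := (⌊r.1 / d⌋, ⌊r.2 / d⌋)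

/-- Forward neighbourhood of a cell: itself, right, and the three below. -/
def fwd (c : ℤ × ℤ) : Set (ℤ × ℤ) :=
  {c, (c.1, c.2 + 1), (c.1 + 1, c.2 - 1), (c.1 + 1, c.2), (c.1 + 1, c.2 + 1)}

lemma floor_close (d : ℝ) (hd : 0 < d) (x y : ℝ) (h : |x - y| < d) :
    |⌊x / d⌋ - ⌊y / d⌋| ≤ 1 := by
  rw [abs_lt] at h
  rw [abs_le]
  have hx : x / d < y / d + 1 := by
    rw [div_lt_iff₀ hd, add_mul, div_mul_cancel₀ y hd.ne']; linarith [h.2]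
  have hy : y / d < x / d + 1 := by
    rw [div_lt_iff₀ hd, add_mul, div_mul_cancel₀ x hd.ne']; linarith [h.1]
  constructor
  · have := Int.floor_le_floor (le_of_lt hy)
    rw [Int.floor_add_one] at this; omega
  · have := Int.floor_le_floor (le_of_lt hx)
    rw [Int.floor_add_one] at this; omega

theorem half_neighbourhood_correct (d : ℝ) (hd : 0 < d) (p q : ℝ × ℝ)
    (hp : 0 ≤ p.1 ∧ 0 ≤ p.2) (hq : 0 ≤ q.1 ∧ 0 ≤ q.2) (hne : p ≠ q)
    (hclose : eDist p q < d) :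
    cell d q ∈ fwd (cell d p) ∨ cell d p ∈ fwd (cell d q) := by
  have hs : (p.1 - q.1) ^ 2 + (p.2 - q.2) ^ 2 < d ^ 2 := by
    have := hclose
    rw [eDist, Real.sqrt_lt' hd] at this
    exact this
  have h1 : |p.1 - q.1| < d := by
    nlinarith [abs_nonneg (p.1 - q.1), sq_abs (p.1 - q.1), sq_nonneg (p.2 - q.2),
      abs_nonneg (p.1 - q.1)]
  have h2 : |p.2 - q.2| < d := by
    nlinarith [abs_nonneg (p.2 - q.2), sq_abs (p.2 - q.2), sq_nonneg (p.1 - q.1)]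
  have f1 := floor_close d hd p.1 q.1 h1
  have f2 := floor_close d hd p.2 q.2 h2
  rw [abs_le] at f1 f2
  simp only [cell, fwd, Set.mem_insert_iff, Set.mem_singleton_iff, Prod.ext_iff]
  omega
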